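/- Consider a finite episodic MDP with finite state set S, finite action set A, horizon H, transition kernels p_h : S × A → Σ_S for h ∈ {1,…,H}, deterministic rewards r_h : S × A → ℝ, and a deterministic policy π = (π_h)_{h∈{1,…,H}} with π_h : S → A. For every h ∈ {1,…,H} and (s,a) ∈ S × A, the conditional second moment of the centered return satisfies E_π[ ( Σ_{h'=h}^H r_{h'}(s_{h'}, a_{h'}) − Q_h^π(s,a) )² | (s_h, a_h) = (s,a) ] = σQ_h^π(s,a). In particular, E_π[ ( Σ_{h=1}^H r_h(s_h, a_h) − V_1^π(s_1) )² ] = σV_1^π(s_1) = Σ_{h=1}^H Σ_{(s,a)} p_h^π(s,a) · Var_{p_h(·|s,a)}(V_{h+1}^π), where p_h^π(s,a) is the probability of being at state-action pair (s,a) at step h when following π from s_1. -/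

import Mathlib

open Finset

/-- Variance of `f : S → ℝ` under a finitely supported distribution `p ∈ Σ_S`. -/
noncomputable def Varp {S : Type*} [Fintype S] (p f : S → ℝ) : ℝ :=
  ∑ s, p s * (f s - ∑ s', p s' * f s') ^ 2

section MDP

variable {S A : Type*} [Fintype S] [Fintype A]

/-- Value function of the deterministic policy `π` with `j` steps to go in a horizon-`H`
episodic MDP: `Vval H p r π j s = V_{H+1-j}^π(s)` (so `Vval H p r π 0 = V_{H+1}^π = 0`). -/
noncomputable def Vval (H : ℕ) (p : ℕ → S → A → S → ℝ) (r : ℕ → S → A → ℝ)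
    (π : ℕ → S → A) : ℕ → S → ℝ
  | 0, _ => 0
  | j + 1, s =>
      r (H - j) s (π (H - j) s)
        + ∑ s', p (H - j) s (π (H - j) s) s' * Vval H p r π j s'

/-- Q-value function with `j` steps to go: `Qval H p r π j s a = Q_{H+1-j}^π(s,a)`. -/
noncomputable def Qval (H : ℕ) (p : ℕ → S → A → S → ℝ) (r : ℕ → S → A → ℝ)
    (π : ℕ → S → A) : ℕ → S → A → ℝ
  | 0, _, _ => 0
  | j + 1, s, a => r (H - j) s a + ∑ s', p (H - j) s a s' * Vval H p r π j s'

/-- Bellman-type variance function `σV`: `sigmaV H p r π j s = σV_{H+1-j}^π(s)`. -/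
noncomputable def sigmaV (H : ℕ) (p : ℕ → S → A → S → ℝ) (r : ℕ → S → A → ℝ)
    (π : ℕ → S → A) : ℕ → S → ℝ
  | 0, _ => 0
  | j + 1, s =>
      Varp (p (H - j) s (π (H - j) s)) (Vval H p r π j)
        + ∑ s', p (H - j) s (π (H - j) s) s' * sigmaV H p r π j s'

/-- Bellman-type variance function `σQ`: `sigmaQ H p r π j s a = σQ_{H+1-j}^π(s,a)`. -/
noncomputable def sigmaQ (H : ℕ) (p : ℕ → S → A → S → ℝ) (r : ℕ → S → A → ℝ)
    (π : ℕ → S → A) : ℕ → S → A → ℝ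
  | 0, _, _ => 0
  | j + 1, s, a =>
      Varp (p (H - j) s a) (Vval H p r π j)
        + ∑ s', p (H - j) s a s' * sigmaV H p r π j s'

/-- Expectation, over a trajectory that starts in state `s` with `j` steps to go (i.e. at
step `H+1-j`) and follows the policy `π`, of `f` applied to the sum of the rewards
collected along the trajectory.  This is the iterated-bind (tower-rule) definition of the
trajectory expectation. -/
noncomputable def Eret (H : ℕ) (p : ℕ → S → A → S → ℝ) (r : ℕ → S → A → ℝ)
    (π : ℕ → S → A) : ℕ → S → (ℝ → ℝ) → ℝ
  | 0, _, f => f 0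
  | j + 1, s, f =>
      ∑ s', p (H - j) s (π (H - j) s) s'
        * Eret H p r π j s' (fun x => f (r (H - j) s (π (H - j) s) + x))

/-- Same as `Eret`, but conditionally on the first action being `a` (the following
actions are chosen by `π`). -/
noncomputable def EretSA (H : ℕ) (p : ℕ → S → A → S → ℝ) (r : ℕ → S → A → ℝ)
    (π : ℕ → S → A) : ℕ → S → A → (ℝ → ℝ) → ℝ
  | 0, _, _, f => f 0
  | j + 1, s, a, f =>
      ∑ s', p (H - j) s a s' * Eret H p r π j s' (fun x => f (r (H - j) s a + x))

/-- State occupancy measure: `occ p π s1 j s` is the probability of being in state `s`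
at step `j + 1` when starting from `s1` at step `1` and following the policy `π`. -/
noncomputable def occ [DecidableEq S] (p : ℕ → S → A → S → ℝ) (π : ℕ → S → A)
    (s1 : S) : ℕ → S → ℝ
  | 0, s => if s = s1 then 1 else 0
  | j + 1, s' => ∑ s, occ p π s1 j s * p (j + 1) s (π (j + 1) s) s'


section Helpers

variable {S A : Type*} [Fintype S] [Fintype A]

/-- Shifted second-moment identity. -/
lemma sum_shift_sq (P V : S → ℝ) (d : ℝ) (h1 : ∑ s, P s = 1) :
    ∑ s, P s * (V s - d) ^ 2
      = (∑ s, P s * (V s - ∑ s', P s' * V s') ^ 2) + ((∑ s', P s' * V s') - d) ^ 2 := by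
  have key : ∀ s, P s * (V s - d) ^ 2
      = P s * (V s - ∑ s', P s' * V s') ^ 2
        + (2 * ((∑ s', P s' * V s') - d)) * (P s * V s)
        - ((d + ∑ s', P s' * V s') * ((∑ s', P s' * V s') - d)) * P s := by
    intro s; ring
  rw [Finset.sum_congr rfl fun s _ => key s]
  rw [Finset.sum_sub_distrib, Finset.sum_add_distrib, ← Finset.mul_sum, ← Finset.mul_sum, h1]
  ring

lemma Eret_sq (H : ℕ) (p : ℕ → S → A → S → ℝ) (r : ℕ → S → A → ℝ) (π : ℕ → S → A)
    (hp : ∀ h s a, 1 ≤ h → h ≤ H → (∀ s', 0 ≤ p h s a s') ∧ ∑ s', p h s a s' = 1) :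
    ∀ j, j ≤ H → ∀ s (c : ℝ),
      Eret H p r π j s (fun x => (x - c) ^ 2)
        = sigmaV H p r π j s + (Vval H p r π j s - c) ^ 2 := by
  intro j
  induction j with
  | zero => intro _ s c; simp [Eret, sigmaV, Vval]
  | succ j ih =>
    intro hj s c
    have hj' : j ≤ H := Nat.le_of_succ_le hj
    have hsum : ∑ s', p (H - j) s (π (H - j) s) s' = 1 :=
      (hp (H - j) s (π (H - j) s) (by omega) (Nat.sub_le H j)).2
    set P := p (H - j) s (π (H - j) s) with hP
    set ρ := r (H - j) s (π (H - j) s) with hρ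
    have hE : Eret H p r π (j + 1) s (fun x => (x - c) ^ 2)
        = ∑ s', P s' * Eret H p r π j s' (fun x => (ρ + x - c) ^ 2) := by
      simp [Eret, hP, hρ]
    rw [hE]
    have hfun : (fun x : ℝ => (ρ + x - c) ^ 2) = (fun x : ℝ => (x - (c - ρ)) ^ 2) := by
      funext x; ring
    have hterm : ∀ s', Eret H p r π j s' (fun x => (ρ + x - c) ^ 2)
        = sigmaV H p r π j s' + (Vval H p r π j s' - (c - ρ)) ^ 2 := by
      intro s'; rw [hfun]; exact ih hj' s' (c - ρ)
    rw [Finset.sum_congr rfl fun s' _ => by rw [hterm s']]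
    rw [Finset.sum_congr rfl fun s' (_ : s' ∈ Finset.univ) =>
      mul_add (P s') (sigmaV H p r π j s') ((Vval H p r π j s' - (c - ρ)) ^ 2)]
    rw [Finset.sum_add_distrib, sum_shift_sq P (Vval H p r π j) (c - ρ) hsum]
    simp only [sigmaV, Vval, Varp, ← hP, ← hρ]
    ring

lemma EretSA_sq (H : ℕ) (p : ℕ → S → A → S → ℝ) (r : ℕ → S → A → ℝ) (π : ℕ → S → A)
    (hp : ∀ h s a, 1 ≤ h → h ≤ H → (∀ s', 0 ≤ p h s a s') ∧ ∑ s', p h s a s' = 1) :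
    ∀ j, j + 1 ≤ H → ∀ s a,
      EretSA H p r π (j + 1) s a (fun x => (x - Qval H p r π (j + 1) s a) ^ 2)
        = sigmaQ H p r π (j + 1) s a := by
  intro j hj s a
  have hj' : j ≤ H := Nat.le_of_succ_le hj
  have hsum : ∑ s', p (H - j) s a s' = 1 :=
    (hp (H - j) s a (by omega) (Nat.sub_le H j)).2
  set P := p (H - j) s a with hP
  set ρ := r (H - j) s a with hρ
  set c := Qval H p r π (j + 1) s a with hc
  have hE : EretSA H p r π (j + 1) s a (fun x => (x - c) ^ 2)
      = ∑ s', P s' * Eret H p r π j s' (fun x => (ρ + x - c) ^ 2) := by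
    simp [EretSA, hP, hρ]
  rw [hE]
  have hfun : (fun x : ℝ => (ρ + x - c) ^ 2) = (fun x : ℝ => (x - (c - ρ)) ^ 2) := by
    funext x; ring
  have hterm : ∀ s', Eret H p r π j s' (fun x => (ρ + x - c) ^ 2)
      = sigmaV H p r π j s' + (Vval H p r π j s' - (c - ρ)) ^ 2 := by
    intro s'; rw [hfun]; exact Eret_sq H p r π hp j hj' s' (c - ρ)
  rw [Finset.sum_congr rfl fun s' _ => by rw [hterm s']]
  rw [Finset.sum_congr rfl fun s' (_ : s' ∈ Finset.univ) =>
    mul_add (P s') (sigmaV H p r π j s') ((Vval H p r π j s' - (c - ρ)) ^ 2)]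
  rw [Finset.sum_add_distrib, sum_shift_sq P (Vval H p r π j) (c - ρ) hsum]
  have hcval : c = ρ + ∑ s', P s' * Vval H p r π j s' := by
    simp only [hc, Qval, hP, hρ]
  rw [hcval]
  simp only [sigmaQ, Varp, ← hP]
  ring

lemma occ_sigma [DecidableEq S] (H : ℕ) (p : ℕ → S → A → S → ℝ) (r : ℕ → S → A → ℝ)
    (π : ℕ → S → A) (s1 : S) :
    ∀ n, n ≤ H →
      ∑ s, occ p π s1 (H - n) s * sigmaV H p r π n s
        = ∑ h ∈ Finset.Icc (H - n + 1) H, ∑ s,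
            occ p π s1 (h - 1) s * Varp (p h s (π h s)) (Vval H p r π (H - h)) := by
  intro n
  induction n with
  | zero => simp [sigmaV]
  | succ n ih =>
    intro hn
    have hn' : n ≤ H := Nat.le_of_succ_le hn
    have hm1 : H - (n + 1) + 1 = H - n := by omega
    have occ_succ : ∀ s', occ p π s1 (H - n) s'
        = ∑ s, occ p π s1 (H - (n + 1)) s * p (H - n) s (π (H - n) s) s' := by
      intro s'
      conv_lhs => rw [← hm1]
      rw [show occ p π s1 (H - (n + 1) + 1) s'
          = ∑ s, occ p π s1 (H - (n + 1)) s
              * p (H - (n + 1) + 1) s (π (H - (n + 1) + 1) s) s' from rfl]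
      rw [hm1]
    have lhs_eq : ∑ s, occ p π s1 (H - (n + 1)) s * sigmaV H p r π (n + 1) s
        = (∑ s, occ p π s1 (H - (n + 1)) s
              * Varp (p (H - n) s (π (H - n) s)) (Vval H p r π n))
          + ∑ s', occ p π s1 (H - n) s' * sigmaV H p r π n s' := by
      simp only [sigmaV, mul_add, Finset.sum_add_distrib]
      congr 1
      simp only [Finset.mul_sum]
      rw [Finset.sum_comm]
      refine Finset.sum_congr rfl fun s' _ => ?_
      rw [occ_succ s', Finset.sum_mul]
      exact Finset.sum_congr rfl fun s _ => by ring
    rw [lhs_eq, ih hn']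
    have hset : Finset.Icc (H - (n + 1) + 1) H = insert (H - n) (Finset.Icc (H - n + 1) H) := by
      ext x
      simp only [Finset.mem_Icc, Finset.mem_insert]
      omega
    rw [hset, Finset.sum_insert (by simp only [Finset.mem_Icc]; omega)]
    congr 1
    refine Finset.sum_congr rfl fun s _ => ?_
    have h1 : H - n - 1 = H - (n + 1) := by omega
    have h2 : H - (H - n) = n := by omega
    rw [h1, h2]

end Helpers

/-- Law of total variance in an episodic MDP.  For every step
`h ∈ {1,…,H}` and state-action pair `(s,a)`, the conditional second moment of the
centered return equals the Bellman variance: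
`E_π[(Σ_{h'=h}^H r_{h'}(s_{h'},a_{h'}) − Q_h^π(s,a))² | (s_h,a_h) = (s,a)] = σQ_h^π(s,a)`;
in particular
`E_π[(Σ_{h=1}^H r_h(s_h,a_h) − V_1^π(s_1))²] = σV_1^π(s_1)
  = Σ_{h=1}^H Σ_{(s,a)} p_h^π(s,a) Var_{p_h(·|s,a)}(V_{h+1}^π)`,
where `p_h^π(s,a) = occ p π s1 (h-1) s · 1{a = π_h(s)}`.  Step `h` corresponds to
`H + 1 - h` steps to go. -/
theorem law_of_total_variance {S A : Type*} [Fintype S] [Fintype A] [DecidableEq S]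
    [DecidableEq A]
    (H : ℕ) (hH : 1 ≤ H)
    (p : ℕ → S → A → S → ℝ) (r : ℕ → S → A → ℝ) (π : ℕ → S → A) (s1 : S)
    (hp : ∀ h s a, 1 ≤ h → h ≤ H →
      (∀ s', 0 ≤ p h s a s') ∧ ∑ s', p h s a s' = 1) :
    (∀ h, 1 ≤ h → h ≤ H → ∀ s a,
      EretSA H p r π (H + 1 - h) s a
          (fun x => (x - Qval H p r π (H + 1 - h) s a) ^ 2)
        = sigmaQ H p r π (H + 1 - h) s a)
    ∧ Eret H p r π H s1 (fun x => (x - Vval H p r π H s1) ^ 2)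
        = sigmaV H p r π H s1
    ∧ sigmaV H p r π H s1
        = ∑ h ∈ Finset.Icc 1 H, ∑ s, ∑ a,
            (occ p π s1 (h - 1) s * if a = π h s then (1 : ℝ) else 0)
              * Varp (p h s a) (Vval H p r π (H - h)) := by
  constructor
  · intro h h1 hh s a
    have hrw : H + 1 - h = (H - h) + 1 := by omega
    rw [hrw]
    exact EretSA_sq H p r π hp (H - h) (by omega) s a
  constructor
  · have := Eret_sq H p r π hp H le_rfl s1 (Vval H p r π H s1)
    simpa using this
  · have hstart : sigmaV H p r π H s1 = ∑ s, occ p π s1 (H - H) s * sigmaV H p r π H s := by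
      rw [Nat.sub_self]
      rw [show (fun s => occ p π s1 0 s * sigmaV H p r π H s)
          = fun s => (if s = s1 then (1 : ℝ) else 0) * sigmaV H p r π H s from rfl]
      simp
    rw [hstart, occ_sigma H p r π s1 H le_rfl]
    rw [show H - H + 1 = 1 by omega]
    refine Finset.sum_congr rfl fun h _ => Finset.sum_congr rfl fun s _ => ?_
    rw [Finset.sum_eq_single (π h s)]
    · simp
    · intro b _ hb; simp [hb]
    · simp

end MDP
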